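/- A family (f_t)_{t≥0} in L¹(ℝ^{dN}) solves the Kac master equation ∂_t f_t = λN(Q − I)f_t + μN(R − I)f_t if and only if the ground-state transformed family h_t(v) := f_t(v)/g_β^{(N)}(v) solves the transformed master equation ∂_t h_t = λN(Q − I)h_t + μN(T − I)h_t, where T = (1/N) Σ_{j=1}^N T_j and T_j[h](v) = ∫_{ℝ^d} g_β^{(1)}(w) dw ∫_{S^{d−1}} dρ(σ) h(P M_σ^{(j,N+1)}(v,w)). -/

import Mathlib

open MeasureTheory Real

noncomputable section

/-- `ℝ^{dn}`: the Euclidean space of `n` particle velocities in dimension `d`. -/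
abbrev PSpace (d n : ℕ) : Type := EuclideanSpace ℝ (Fin n × Fin d)

/-- `ℝ^d`. -/
abbrev Vec (d : ℕ) : Type := EuclideanSpace ℝ (Fin d)

/-- The Maxwellian (Gaussian) density with inverse temperature `β`. -/
def maxwellian (β : ℝ) {ι : Type} [Fintype ι] (v : EuclideanSpace ℝ ι) : ℝ :=
  (β / (2 * π)) ^ ((Fintype.card ι : ℝ) / 2) * exp (-β / 2 * ‖v‖ ^ 2)

/-- The reflection collision `M_σ^{(i,j)}` of particles `i` and `j` with direction `σ`:
particle `i` becomes `v_i - ⟪σ, v_i - v_j⟫ σ`, particle `j` becomes `v_j + ⟪σ, v_i - v_j⟫ σ`. -/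
def collide {d n : ℕ} (σ : Vec d) (i j : Fin n) (v : PSpace d n) : PSpace d n :=
  WithLp.toLp 2 fun p =>
    if p.1 = i then v p - (∑ a, σ a * (v (i, a) - v (j, a))) * σ p.2
    else if p.1 = j then v p + (∑ a, σ a * (v (i, a) - v (j, a))) * σ p.2
    else v p

/-- The post-collisional velocity of the thermostat particle colliding with particle `j`. -/
def thermOut {d n : ℕ} (σ : Vec d) (j : Fin n) (w : Vec d) (v : PSpace d n) : Vec d :=
  WithLp.toLp 2 fun a => w a + (∑ b, σ b * (v (j, b) - w b)) * σ a

/-- The collision of particle `j` with a thermostat particle of velocity `w`: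
the first `n` components of `M_σ^{(j,n+1)}(v,w)`. -/
def thermCollide {d n : ℕ} (σ : Vec d) (j : Fin n) (w : Vec d) (v : PSpace d n) : PSpace d n :=
  WithLp.toLp 2 fun p => if p.1 = j then v p - (∑ b, σ b * (v (j, b) - w b)) * σ p.2 else v p

/-- The Kac collision operator `Q` (the identity if `n = 1`). -/
def Qop {d n : ℕ} (ρ : Measure (Vec d)) (h : PSpace d n → ℝ) : PSpace d n → ℝ :=
  if n = 1 then h
  else fun v => (n.choose 2 : ℝ)⁻¹ *
    ∑ i : Fin n, ∑ j : Fin n, if i < j then ∫ σ, h (collide σ i j v) ∂ρ else 0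

/-- The thermostat interaction operator `R_j`. -/
def Rop_j {d n : ℕ} (ρ : Measure (Vec d)) (β : ℝ) (j : Fin n) (f : PSpace d n → ℝ) :
    PSpace d n → ℝ :=
  fun v => ∫ w : Vec d, ∫ σ, maxwellian β (thermOut σ j w v) * f (thermCollide σ j w v) ∂ρ

/-- The thermostat operator `R = N⁻¹ ∑_j R_j`. -/
def Rop {d n : ℕ} (ρ : Measure (Vec d)) (β : ℝ) (f : PSpace d n → ℝ) : PSpace d n → ℝ :=
  fun v => (n : ℝ)⁻¹ * ∑ j : Fin n, Rop_j ρ β j f v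

/-- The transformed thermostat operator `T_j`. -/
def Tj {d n : ℕ} (ρ : Measure (Vec d)) (β : ℝ) (j : Fin n) (h : PSpace d n → ℝ) :
    PSpace d n → ℝ :=
  fun v => ∫ w : Vec d, maxwellian β w * ∫ σ, h (thermCollide σ j w v) ∂ρ

/-- The transformed thermostat operator `T = N⁻¹ ∑_j T_j`. -/
def Tav {d n : ℕ} (ρ : Measure (Vec d)) (β : ℝ) (h : PSpace d n → ℝ) : PSpace d n → ℝ :=
  fun v => (n : ℝ)⁻¹ * ∑ j : Fin n, Tj ρ β j h v

/-- The generator `L = λN(Q - I) + μN(R - I)` of the Kac system coupled to a thermostat. -/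
def thermGen {d n : ℕ} (ρ : Measure (Vec d)) (β lam mu : ℝ) (f : PSpace d n → ℝ) :
    PSpace d n → ℝ :=
  fun v => lam * n * (Qop ρ f v - f v) + mu * n * (Rop ρ β f v - f v)

/-- The transformed generator `L' = λN(Q - I) + μN(T - I)`. -/
def thermGen' {d n : ℕ} (ρ : Measure (Vec d)) (β lam mu : ℝ) (h : PSpace d n → ℝ) :
    PSpace d n → ℝ :=
  fun v => lam * n * (Qop ρ h v - h v) + mu * n * (Tav ρ β h v - h v)

/-- The exponential semigroup `e^{tL}` of a generator `L = Λ(B - I)`, `B := I + L/Λ`,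
written as the series `e^{-Λt} ∑_k (Λt)^k/k! Bᵏ`. -/
def evolOf {V : Type} (Λ : ℝ) (L : (V → ℝ) → V → ℝ) (t : ℝ) (f : V → ℝ) : V → ℝ :=
  fun v => exp (-(Λ * t)) *
    ∑' k : ℕ, (Λ * t) ^ k / (k.factorial : ℝ) * ((fun g u => g u + L g u / Λ)^[k] f) v

/-- Fisher information with respect to the Gaussian measure `g_β(v)dv`. -/
def fisherInfo {d n : ℕ} (β : ℝ) (h : PSpace d n → ℝ) : ℝ :=
  ∫ v, ‖gradient h v‖ ^ 2 / h v * maxwellian β v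

/-- Relative entropy `S(f|γ) = ∫ f ln(f/γ)`. -/
def relEnt {d n : ℕ} (f γ : PSpace d n → ℝ) : ℝ :=
  ∫ v, f v * log (f v / γ v)

/-- `√h ∈ H¹` with respect to the weight `w`. -/
def sqrtMemH1 {d n : ℕ} (w : PSpace d n → ℝ) (h : PSpace d n → ℝ) : Prop :=
  Differentiable ℝ (fun v => Real.sqrt (h v)) ∧
  Integrable (fun v => Real.sqrt (h v) ^ 2 * w v) ∧
  Integrable (fun v => ‖gradient (fun u => Real.sqrt (h u)) v‖ ^ 2 * w v)

/-- The Ornstein–Uhlenbeck semigroup with respect to the Gaussian `g_β`. -/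
def OU {ι : Type} [Fintype ι] (β s : ℝ) (h : EuclideanSpace ℝ ι → ℝ) :
    EuclideanSpace ℝ ι → ℝ :=
  fun v => ∫ x : EuclideanSpace ℝ ι,
    h (exp (-s) • v + Real.sqrt (1 - exp (-2 * s)) • x) * maxwellian β x

/-- The system block of `u = (v,w) ∈ ℝ^{dN} × ℝ^{dM}`. -/
def blkS {d N M : ℕ} (u : PSpace d (N + M)) : PSpace d N :=
  WithLp.toLp 2 fun p => u (Fin.castAdd M p.1, p.2)

/-- The reservoir block of `u = (v,w) ∈ ℝ^{dN} × ℝ^{dM}`. -/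
def blkR {d N M : ℕ} (u : PSpace d (N + M)) : PSpace d M :=
  WithLp.toLp 2 fun p => u (Fin.natAdd N p.1, p.2)

/-- Gluing `(v, w) ∈ ℝ^{dN} × ℝ^{dM}` into an element of `ℝ^{d(N+M)}`. -/
def glue {d N M : ℕ} (v : PSpace d N) (w : PSpace d M) : PSpace d (N + M) :=
  WithLp.toLp 2 fun p =>
    if h : (p.1 : ℕ) < N then v (⟨p.1, h⟩, p.2)
    else w (⟨(p.1 : ℕ) - N, by have := p.1.isLt; omega⟩, p.2)

/-- The pair collision operator `R_{ij}`. -/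
def Rij {d n : ℕ} (ρ : Measure (Vec d)) (i j : Fin n) (F : PSpace d n → ℝ) : PSpace d n → ℝ :=
  fun u => ∫ σ, F (collide σ i j u) ∂ρ

/-- The generator of the Kac system coupled to a heat reservoir. -/
def hrGen {d N M : ℕ} (ρ : Measure (Vec d)) (lamS lamR mu : ℝ)
    (F : PSpace d (N + M) → ℝ) : PSpace d (N + M) → ℝ :=
  fun u =>
    lamS / ((N : ℝ) - 1) *
        ∑ i : Fin (N + M), ∑ j : Fin (N + M), (if (i : ℕ) < (j : ℕ) ∧ (j : ℕ) < N then Rij ρ i j F u - F u else 0) +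
    lamR / ((M : ℝ) - 1) *
        ∑ i : Fin (N + M), ∑ j : Fin (N + M), (if N ≤ (i : ℕ) ∧ (i : ℕ) < (j : ℕ) then Rij ρ i j F u - F u else 0) +
    mu / (M : ℝ) *
        ∑ i : Fin (N + M), ∑ j : Fin (N + M), (if (i : ℕ) < N ∧ N ≤ (j : ℕ) then Rij ρ i j F u - F u else 0)

/-- `Λ = λ_S N/2 + λ_R M/2 + μN`. -/
def hrLam (N M : ℕ) (lamS lamR mu : ℝ) : ℝ :=
  lamS * N / 2 + lamR * M / 2 + mu * N

/-- The heat-reservoir evolution `e^{tL}`. -/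
def hrEvol {d N M : ℕ} (ρ : Measure (Vec d)) (lamS lamR mu : ℝ) (t : ℝ)
    (F₀ : PSpace d (N + M) → ℝ) : PSpace d (N + M) → ℝ :=
  evolOf (hrLam N M lamS lamR mu) (hrGen ρ lamS lamR mu) t F₀

/-- The generator of the classic Kac model on `n` particles. -/
def clGen {d n : ℕ} (ρ : Measure (Vec d)) (F : PSpace d n → ℝ) : PSpace d n → ℝ :=
  fun u => 2 / ((n : ℝ) - 1) *
    ∑ i : Fin n, ∑ j : Fin n, (if (i : ℕ) < (j : ℕ) then Rij ρ i j F u - F u else 0)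

/-- Lebesgue marginal over the reservoir variables. -/
def margLeb {d N M : ℕ} (F : PSpace d (N + M) → ℝ) : PSpace d N → ℝ :=
  fun v => ∫ w : PSpace d M, F (glue v w)

/-- Gaussian marginal `Π` over the reservoir variables. -/
def margGauss {d N M : ℕ} (β : ℝ) (φ : PSpace d (N + M) → ℝ) : PSpace d N → ℝ :=
  fun v => ∫ w : PSpace d M, φ (glue v w) * maxwellian β w

/-- The reflection collision matrix `M_σ^{(i,j)}` as a `dn × dn` matrix. -/
def colMat {d n : ℕ} (σ : Vec d) (i j : Fin n) :
    Matrix (Fin n × Fin d) (Fin n × Fin d) ℝ :=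
  fun p q =>
    (if p = q then (1 : ℝ) else 0) +
    (if (p.1 = i ∧ q.1 = j) ∨ (p.1 = j ∧ q.1 = i) then σ p.2 * σ q.2 else 0) -
    (if (p.1 = i ∧ q.1 = i) ∨ (p.1 = j ∧ q.1 = j) then σ p.2 * σ q.2 else 0)

/-- The product `M_{σ_k}^{(α_k)} ⋯ M_{σ_1}^{(α_1)}` of a collision history. -/
def histMat {d n : ℕ} (k : ℕ) (α : Fin k → Fin n × Fin n) (σs : Fin k → Vec d) :
    Matrix (Fin n × Fin d) (Fin n × Fin d) ℝ :=
  ((List.ofFn fun m : Fin k => colMat (σs m) (α m).1 (α m).2).reverse).prod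

/-- The top-left `dN × dN` block of a `d(N+M) × d(N+M)` matrix. -/
def topLeftBlk {d N M : ℕ} (A : Matrix (Fin (N + M) × Fin d) (Fin (N + M) × Fin d) ℝ) :
    Matrix (Fin N × Fin d) (Fin N × Fin d) ℝ :=
  fun p q => A (Fin.castAdd M p.1, p.2) (Fin.castAdd M q.1, q.2)

/-- The collision-history weights `λ_{(i,j)}`. -/
def hrWeight (N M : ℕ) (lamS lamR mu : ℝ) (ij : Fin (N + M) × Fin (N + M)) : ℝ :=
  if (ij.1 : ℕ) < (ij.2 : ℕ) then
    if (ij.2 : ℕ) < N then lamS / (hrLam N M lamS lamR mu * ((N : ℝ) - 1))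
    else if N ≤ (ij.1 : ℕ) then lamR / (hrLam N M lamS lamR mu * ((M : ℝ) - 1))
    else mu / (hrLam N M lamS lamR mu * (M : ℝ))
  else 0

/-! ### Auxiliary lemmas -/

lemma msum {ι : Type} [Fintype ι] (x : EuclideanSpace ℝ ι) : ‖x‖ ^ 2 = ∑ i, x i ^ 2 := by
  rw [EuclideanSpace.norm_eq, Real.sq_sqrt (by positivity)]
  simp [sq_abs]

lemma maxwellian_pos {ι : Type} [Fintype ι] {β : ℝ} (hβ : 0 < β) (v : EuclideanSpace ℝ ι) :
    0 < maxwellian β v := by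
  unfold maxwellian
  have h1 : (0:ℝ) < β / (2 * π) := div_pos hβ (by positivity)
  positivity

lemma maxwellian_eq_of_sum_sq {ι : Type} [Fintype ι] (β : ℝ) (x y : EuclideanSpace ℝ ι)
    (h : ∑ i, x i ^ 2 = ∑ i, y i ^ 2) : maxwellian β x = maxwellian β y := by
  unfold maxwellian
  rw [msum, msum, h]

lemma maxwellian_mul {ι κ : Type} [Fintype ι] [Fintype κ] (β : ℝ)
    (x x' : EuclideanSpace ℝ ι) (y y' : EuclideanSpace ℝ κ)
    (h : (∑ i, x i ^ 2) + ∑ j, y j ^ 2 = (∑ i, x' i ^ 2) + ∑ j, y' j ^ 2) :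
    maxwellian β x * maxwellian β y = maxwellian β x' * maxwellian β y' := by
  unfold maxwellian
  rw [msum, msum, msum, msum, mul_mul_mul_comm, mul_mul_mul_comm _ (Real.exp _),
    ← Real.exp_add, ← Real.exp_add, ← mul_add, ← mul_add, h]

lemma sum_sq_add {d : ℕ} (σ : Vec d) (x : Fin d → ℝ) (t : ℝ) :
    ∑ a, (x a + t * σ a) ^ 2 =
      (∑ a, x a ^ 2) + (2 * t * (∑ a, σ a * x a) + t ^ 2 * ∑ a, σ a ^ 2) := by
  rw [Finset.mul_sum, Finset.mul_sum, ← Finset.sum_add_distrib, ← Finset.sum_add_distrib]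
  exact Finset.sum_congr rfl fun a _ => by ring

lemma collide_energy {d n : ℕ} (σ : Vec d) (hσ : ∑ a, σ a ^ 2 = 1)
    {i j : Fin n} (hij : i ≠ j) (v : PSpace d n) :
    ∑ p, collide σ i j v p ^ 2 = ∑ p, v p ^ 2 := by
  set c := ∑ a, σ a * (v (i, a) - v (j, a)) with hc
  have hcval : c = (∑ a, σ a * v (i, a)) - ∑ a, σ a * v (j, a) := by
    rw [hc, ← Finset.sum_sub_distrib]
    exact Finset.sum_congr rfl fun a _ => by ring
  rw [Fintype.sum_prod_type, Fintype.sum_prod_type]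
  have key : ∀ k : Fin n, (∑ a, collide σ i j v (k, a) ^ 2) =
      (∑ a, v (k, a) ^ 2) +
        ((if k = i then 2 * (-c) * (∑ a, σ a * v (i, a)) + (-c) ^ 2 * ∑ a, σ a ^ 2 else 0) +
          (if k = j then 2 * c * (∑ a, σ a * v (j, a)) + c ^ 2 * ∑ a, σ a ^ 2 else 0)) := by
    intro k
    by_cases hki : k = i
    · subst hki
      rw [if_pos rfl, if_neg hij]
      have hco : ∀ a : Fin d, collide σ k j v (k, a) = v (k, a) + (-c) * σ a := by
        intro a
        simp only [collide, WithLp.ofLp_toLp]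
        rw [if_pos trivial]
        ring
      simp only [hco]
      rw [sum_sq_add]
      ring
    · by_cases hkj : k = j
      · subst hkj
        rw [if_neg hki, if_pos rfl]
        have hco : ∀ a : Fin d, collide σ i k v (k, a) = v (k, a) + c * σ a := by
          intro a
          simp only [collide, WithLp.ofLp_toLp]
          rw [if_neg hki, if_pos trivial]
        simp only [hco]
        rw [sum_sq_add]
        ring
      · rw [if_neg hki, if_neg hkj]
        have hco : ∀ a : Fin d, collide σ i j v (k, a) = v (k, a) := by
          intro a
          simp only [collide, WithLp.ofLp_toLp, if_neg hki, if_neg hkj]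
        simp only [hco]
        ring
  simp only [key]
  rw [Finset.sum_add_distrib, Finset.sum_add_distrib]
  simp only [Finset.sum_ite_eq', Finset.mem_univ, if_true, hσ]
  rw [hcval]
  ring

lemma therm_energy {d n : ℕ} (σ : Vec d) (hσ : ∑ a, σ a ^ 2 = 1) (j : Fin n)
    (w : Vec d) (v : PSpace d n) :
    (∑ p, thermCollide σ j w v p ^ 2) + ∑ a, thermOut σ j w v a ^ 2
      = (∑ p, v p ^ 2) + ∑ a, w a ^ 2 := by
  set c := ∑ b, σ b * (v (j, b) - w b) with hc
  have hcval : c = (∑ a, σ a * v (j, a)) - ∑ a, σ a * w a := by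
    rw [hc, ← Finset.sum_sub_distrib]
    exact Finset.sum_congr rfl fun a _ => by ring
  have hout : ∀ a : Fin d, thermOut σ j w v a = w a + c * σ a := by
    intro a
    simp only [thermOut, WithLp.ofLp_toLp]
    rfl
  rw [Fintype.sum_prod_type, Fintype.sum_prod_type]
  have key : ∀ k : Fin n, (∑ a, thermCollide σ j w v (k, a) ^ 2) =
      (∑ a, v (k, a) ^ 2) +
        (if k = j then 2 * (-c) * (∑ a, σ a * v (j, a)) + (-c) ^ 2 * ∑ a, σ a ^ 2 else 0) := by
    intro k
    by_cases hkj : k = j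
    · subst hkj
      rw [if_pos rfl]
      have hco : ∀ a : Fin d, thermCollide σ k w v (k, a) = v (k, a) + (-c) * σ a := by
        intro a
        simp only [thermCollide, WithLp.ofLp_toLp]
        rw [if_pos trivial]
        ring
      simp only [hco]
      rw [sum_sq_add]
    · rw [if_neg hkj]
      have hco : ∀ a : Fin d, thermCollide σ j w v (k, a) = v (k, a) := by
        intro a
        simp only [thermCollide, WithLp.ofLp_toLp, if_neg hkj]
      simp only [hco]
      ring
  simp only [key, hout]
  rw [Finset.sum_add_distrib, sum_sq_add]
  simp only [Finset.sum_ite_eq', Finset.mem_univ, if_true, hσ]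
  rw [hcval]
  ring

lemma sum_sq_of_norm_one {d : ℕ} {σ : Vec d} (hσ : ‖σ‖ = 1) : ∑ a, σ a ^ 2 = 1 := by
  rw [← msum, hσ, one_pow]

lemma Qop_eq {d n : ℕ} (β : ℝ) (hβ : 0 < β) (ρ : Measure (Vec d))
    (hρsph : ∀ᵐ σ ∂ρ, ‖σ‖ = 1) (f : PSpace d n → ℝ) (v : PSpace d n) :
    Qop ρ (fun u => f u / maxwellian β u) v = Qop ρ f v / maxwellian β v := by
  unfold Qop
  by_cases h1 : n = 1
  · simp [h1]
  · simp only [h1, if_false]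
    rw [mul_div_assoc, Finset.sum_div]
    congr 1
    refine Finset.sum_congr rfl fun i _ => ?_
    rw [Finset.sum_div]
    refine Finset.sum_congr rfl fun j _ => ?_
    by_cases hij : i < j
    · simp only [hij, if_true]
      rw [← integral_div]
      refine integral_congr_ae (hρsph.mono fun σ hσ => ?_)
      have : maxwellian β (collide σ i j v) = maxwellian β v :=
        maxwellian_eq_of_sum_sq β _ _
          (collide_energy σ (sum_sq_of_norm_one hσ) (ne_of_lt hij) v)
      simp only [this]
    · simp [hij]

lemma Tj_eq {d n : ℕ} (β : ℝ) (hβ : 0 < β) (ρ : Measure (Vec d))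
    (hρsph : ∀ᵐ σ ∂ρ, ‖σ‖ = 1) (j : Fin n) (f : PSpace d n → ℝ) (v : PSpace d n) :
    Tj ρ β j (fun u => f u / maxwellian β u) v = Rop_j ρ β j f v / maxwellian β v := by
  unfold Tj Rop_j
  rw [← integral_div]
  refine integral_congr_ae (Filter.Eventually.of_forall fun w => ?_)
  dsimp only
  rw [← integral_div, ← integral_const_mul]
  refine integral_congr_ae (hρsph.mono fun σ hσ => ?_)
  have h1 : maxwellian β (thermCollide σ j w v) * maxwellian β (thermOut σ j w v)
      = maxwellian β v * maxwellian β w :=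
    maxwellian_mul β _ _ _ _ (therm_energy σ (sum_sq_of_norm_one hσ) j w v)
  have hgc := (maxwellian_pos hβ (thermCollide σ j w v)).ne'
  have hgv := (maxwellian_pos hβ v).ne'
  show maxwellian β w * (f (thermCollide σ j w v) / maxwellian β (thermCollide σ j w v))
      = maxwellian β (thermOut σ j w v) * f (thermCollide σ j w v) / maxwellian β v
  field_simp
  linear_combination (-f (thermCollide σ j w v)) * h1

lemma thermGen'_eq {d n : ℕ} (β lam mu : ℝ) (hβ : 0 < β) (ρ : Measure (Vec d))
    (hρsph : ∀ᵐ σ ∂ρ, ‖σ‖ = 1) (f : PSpace d n → ℝ) (v : PSpace d n) :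
    thermGen' ρ β lam mu (fun u => f u / maxwellian β u) v
      = thermGen ρ β lam mu f v / maxwellian β v := by
  have hg := (maxwellian_pos hβ v).ne'
  unfold thermGen' thermGen Tav Rop
  rw [Qop_eq β hβ ρ hρsph f v]
  have hT : ∀ j : Fin n, Tj ρ β j (fun u => f u / maxwellian β u) v
      = Rop_j ρ β j f v / maxwellian β v := fun j => Tj_eq β hβ ρ hρsph j f v
  simp only [hT]
  rw [← Finset.sum_div]
  simp only [div_eq_mul_inv]
  ring

/-- a family solves the Kac master equation iff its ground-state
transform solves the transformed master equation. -/
theorem ground_state_transformed_master_equation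
    (d N : ℕ) (hd : 1 ≤ d) (hN : 1 ≤ N) (β lam mu : ℝ)
    (hβ : 0 < β) (hlam : 0 < lam) (hmu : 0 < mu)
    (ρ : Measure (Vec d)) [IsProbabilityMeasure ρ]
    (hρsph : ∀ᵐ σ ∂ρ, ‖σ‖ = 1)
    (hρsym : ∀ a b : Fin d, (∫ σ, σ a * σ b ∂ρ) = if a = b then (d : ℝ)⁻¹ else 0)
    (f : ℝ → PSpace d N → ℝ) :
    (∀ (t : ℝ) (v : PSpace d N),
        HasDerivAt (fun s => f s v) (thermGen ρ β lam mu (f t) v) t) ↔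
    (∀ (t : ℝ) (v : PSpace d N),
        HasDerivAt (fun s => f s v / maxwellian β v)
          (thermGen' ρ β lam mu (fun u => f t u / maxwellian β u) v) t) := by
  constructor
  · intro H t v
    have hg := (maxwellian_pos (ι := Fin N × Fin d) hβ v).ne'
    have h := (H t v).div_const (maxwellian β v)
    rwa [← thermGen'_eq β lam mu hβ ρ hρsph (f t) v] at h
  · intro H t v
    have hg := (maxwellian_pos (ι := Fin N × Fin d) hβ v).ne'
    have h := (H t v).mul_const (maxwellian β v)
    rw [thermGen'_eq β lam mu hβ ρ hρsph (f t) v, div_mul_cancel₀ _ hg] at h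
    have hfun : (fun s => f s v / maxwellian β v * maxwellian β v) = fun s => f s v :=
      funext fun s => div_mul_cancel₀ _ hg
    rwa [hfun] at h

end
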